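/- arXiv:2108.05437 — 3 statements merged into one kernel-verified Lean document; each statement's English description precedes it below -/
import Mathlib

section
/- Let Ω be a metric space, let p ≥ 2, and let S ⊆ ℝ^p be a bounded convex set with nonempty interior. Let h : ℝ^p → Ω be continuous on S and non-constant on S. Suppose there exist continuous functions g₁, g₂ : ℝ → Ω and vectors α, β ∈ ℝ^p with ‖α‖ = ‖β‖ = 1 and positive first coordinates α₁ > 0 and β₁ > 0, such that h(x) = g₁(α⊤x) and h(x) = g₂(β⊤x) for all x ∈ S. Then α = β, and g₁(t) = g₂(t) for every t in the set {α⊤x : x ∈ S}. -/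
/-- Proposition 1 (identifiability of the single-index Fréchet regression model):
if a metric-space-valued regression function `h`, continuous and non-constant on a
bounded convex set `S` with nonempty interior, admits two single-index representations
with unit directions `α`, `β` (positive first coordinates) and continuous links
`g₁`, `g₂`, then `α = β` and `g₁ = g₂` on the set of index values `{⟪α, x⟫ : x ∈ S}`. -/
theorem identifiability_single_index_frechet
    {Ω : Type*} [MetricSpace Ω] {p : ℕ} (hp : 2 ≤ p)
    (S : Set (EuclideanSpace ℝ (Fin p))) (hSbdd : Bornology.IsBounded S)
    (hSconv : Convex ℝ S) (hSint : (interior S).Nonempty)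
    (h : EuclideanSpace ℝ (Fin p) → Ω) (hcont : ContinuousOn h S)
    (hnonconst : ∃ x ∈ S, ∃ y ∈ S, h x ≠ h y)
    (g₁ g₂ : ℝ → Ω) (hg₁ : Continuous g₁) (hg₂ : Continuous g₂)
    (α β : EuclideanSpace ℝ (Fin p)) (hα : ‖α‖ = 1) (hβ : ‖β‖ = 1)
    (hα1 : 0 < α ⟨0, by omega⟩) (hβ1 : 0 < β ⟨0, by omega⟩)
    (hrep₁ : ∀ x ∈ S, h x = g₁ (inner ℝ α x))
    (hrep₂ : ∀ x ∈ S, h x = g₂ (inner ℝ β x)) :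
    α = β ∧ ∀ t ∈ {t : ℝ | ∃ x ∈ S, (inner ℝ α x : ℝ) = t}, g₁ t = g₂ t := by
  obtain ⟨x₀, hx₀⟩ := hSint
  have hx₀S : x₀ ∈ S := interior_subset hx₀
  have main : α = β := by
    by_contra hne
    -- α ≠ -β since both first coordinates are positive
    have hnegβ : α ≠ -β := by
      intro hEq
      have : α ⟨0, by omega⟩ = -(β ⟨0, by omega⟩) := by rw [hEq]; rfl
      linarith
    set c : ℝ := inner ℝ α β with hcdef
    have hc_lt : c < 1 := (inner_lt_one_iff_real_of_norm_eq_one hα hβ).mpr hne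
    have hc_gt : -1 < c := by
      have h2 : (inner ℝ α (-β) : ℝ) < 1 :=
        (inner_lt_one_iff_real_of_norm_eq_one hα (by rw [norm_neg]; exact hβ)).mpr hnegβ
      have h3 : (inner ℝ α (-β) : ℝ) = -c := by rw [inner_neg_right]
      rw [h3] at h2; linarith
    have hpos : (0:ℝ) < 1 - c ^ 2 := by nlinarith
    have hαα : (inner ℝ α α : ℝ) = 1 := by
      rw [real_inner_self_eq_norm_sq, hα]; norm_num
    have hββ : (inner ℝ β β : ℝ) = 1 := by
      rw [real_inner_self_eq_norm_sq, hβ]; norm_num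
    -- local constancy of h on the interior of S
    have hloc : ∀ z ∈ interior S, ∃ ε > 0, ∀ w ∈ Metric.ball z ε, h w = h z := by
      intro z hz
      obtain ⟨r, hr, hball⟩ := Metric.isOpen_iff.mp isOpen_interior z hz
      set C : ℝ := 2 / (1 - c ^ 2) with hCdef
      have hC : 0 < C := by positivity
      refine ⟨r / (C + 1), by positivity, ?_⟩
      intro w hw
      set d : EuclideanSpace ℝ (Fin p) := w - z with hd
      have hdn : ‖d‖ < r / (C + 1) := by
        rw [hd, ← dist_eq_norm]; exact Metric.mem_ball.mp hw
      set u : EuclideanSpace ℝ (Fin p) :=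
        ((inner ℝ β d : ℝ) / (1 - c ^ 2)) • (β - c • α) with hu
      -- inner products with u
      have hαu : (inner ℝ α u : ℝ) = 0 := by
        simp only [hu, real_inner_smul_right, inner_sub_right]
        rw [hαα, ← hcdef]
        ring
      have hβu : (inner ℝ β u : ℝ) = inner ℝ β d := by
        have hβα : (inner ℝ β α : ℝ) = c := by rw [real_inner_comm]
        simp only [hu, real_inner_smul_right, inner_sub_right]
        rw [hββ, hβα]
        have hcc : 1 - c * c = 1 - c ^ 2 := by ring
        rw [hcc, div_mul_cancel₀ _ (ne_of_gt hpos)]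
      -- norm bound for u
      have h1 : |(inner ℝ β d : ℝ)| ≤ ‖d‖ := by
        have := abs_real_inner_le_norm β d
        rwa [hβ, one_mul] at this
      have h2 : ‖β - c • α‖ ≤ 2 := by
        have habs : |c| ≤ 1 := abs_le.mpr ⟨by linarith, by linarith⟩
        calc ‖β - c • α‖ ≤ ‖β‖ + ‖c • α‖ := norm_sub_le _ _
          _ = 1 + |c| := by rw [hβ, norm_smul, hα, mul_one, Real.norm_eq_abs]
          _ ≤ 2 := by linarith
      have h3 : ‖u‖ ≤ C * ‖d‖ := by
        have heq : ‖u‖ = |(inner ℝ β d : ℝ)| / (1 - c ^ 2) * ‖β - c • α‖ := by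
          rw [hu, norm_smul, Real.norm_eq_abs, abs_div, abs_of_pos hpos]
        rw [heq, hCdef]
        calc |(inner ℝ β d : ℝ)| / (1 - c ^ 2) * ‖β - c • α‖
            ≤ ‖d‖ / (1 - c ^ 2) * 2 := by gcongr
          _ = 2 / (1 - c ^ 2) * ‖d‖ := by ring
      have hun : ‖u‖ < r := by
        have h4 : C * (r / (C + 1)) ≤ r := by
          rw [mul_comm, div_mul_eq_mul_div, div_le_iff₀ (by positivity)]
          nlinarith
        calc ‖u‖ ≤ C * ‖d‖ := h3
          _ < C * (r / (C + 1)) := mul_lt_mul_of_pos_left hdn hC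
          _ ≤ r := h4
      -- membership of the relevant points in S
      have hzuS : z + u ∈ S := by
        apply interior_subset (hball ?_)
        rw [Metric.mem_ball, dist_eq_norm]; simpa using hun
      have hwS : w ∈ S := by
        apply interior_subset (hball ?_)
        apply Metric.ball_subset_ball _ hw
        rw [div_le_iff₀ (by positivity)]; nlinarith
      have hzS : z ∈ S := interior_subset hz
      -- now compute
      have hβw : (inner ℝ β w : ℝ) = inner ℝ β (z + u) := by
        have hwzd : w = z + d := by rw [hd]; abel
        rw [hwzd, inner_add_right, inner_add_right, hβu]
      have hαz : (inner ℝ α (z + u) : ℝ) = inner ℝ α z := by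
        rw [inner_add_right, hαu, add_zero]
      calc h w = g₂ (inner ℝ β w) := hrep₂ w hwS
        _ = g₂ (inner ℝ β (z + u)) := by rw [hβw]
        _ = h (z + u) := (hrep₂ _ hzuS).symm
        _ = g₁ (inner ℝ α (z + u)) := hrep₁ _ hzuS
        _ = g₁ (inner ℝ α z) := by rw [hαz]
        _ = h z := (hrep₁ _ hzS).symm
    -- h is constant on the interior of S (preconnectedness)
    have hconstU : ∀ z ∈ interior S, h z = h x₀ := by
      by_contra hcon
      push_neg at hcon
      obtain ⟨z₁, hz₁, hz₁ne⟩ := hcon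
      choose ε hεpos hε using hloc
      set A : Set (EuclideanSpace ℝ (Fin p)) :=
        ⋃ (z : {z // z ∈ interior S ∧ h z = h x₀}), Metric.ball z (ε z z.2.1) with hA
      set B : Set (EuclideanSpace ℝ (Fin p)) :=
        ⋃ (z : {z // z ∈ interior S ∧ h z ≠ h x₀}), Metric.ball z (ε z z.2.1) with hB
      have hAopen : IsOpen A := isOpen_iUnion fun _ => Metric.isOpen_ball
      have hBopen : IsOpen B := isOpen_iUnion fun _ => Metric.isOpen_ball
      have hcover : interior S ⊆ A ∪ B := by
        intro z hz
        by_cases hcase : h z = h x₀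
        · exact Or.inl (Set.mem_iUnion.mpr ⟨⟨z, hz, hcase⟩,
            Metric.mem_ball_self (hεpos z hz)⟩)
        · exact Or.inr (Set.mem_iUnion.mpr ⟨⟨z, hz, hcase⟩,
            Metric.mem_ball_self (hεpos z hz)⟩)
      have hAne : (interior S ∩ A).Nonempty :=
        ⟨x₀, hx₀, Set.mem_iUnion.mpr ⟨⟨x₀, hx₀, rfl⟩, Metric.mem_ball_self (hεpos x₀ hx₀)⟩⟩
      have hBne : (interior S ∩ B).Nonempty :=
        ⟨z₁, hz₁, Set.mem_iUnion.mpr ⟨⟨z₁, hz₁, hz₁ne⟩,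
          Metric.mem_ball_self (hεpos z₁ hz₁)⟩⟩
      obtain ⟨y, _, hyA, hyB⟩ :=
        (hSconv.interior.isPreconnected) A B hAopen hBopen hcover hAne hBne
      obtain ⟨⟨za, hza⟩, hyza⟩ := Set.mem_iUnion.mp hyA
      obtain ⟨⟨zb, hzb⟩, hyzb⟩ := Set.mem_iUnion.mp hyB
      have e1 : h y = h za := hε za hza.1 y hyza
      have e2 : h y = h zb := hε zb hzb.1 y hyzb
      exact hzb.2 (by rw [← e2, e1, hza.2])
    -- extend constancy to all of S by continuity of g₁ along segments
    have hconstS : ∀ y ∈ S, h y = h x₀ := by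
      intro y hy
      set F : ℝ → Ω := fun s => g₁ ((1 - s) * inner ℝ α x₀ + s * inner ℝ α y) with hF
      have hFcont : Continuous F :=
        hg₁.comp (((continuous_const.sub continuous_id).mul continuous_const).add
          (continuous_id.mul continuous_const))
      have hten : Filter.Tendsto F (nhdsWithin 1 (Set.Iio 1)) (nhds (F 1)) :=
        (hFcont.tendsto 1).mono_left nhdsWithin_le_nhds
      have hev : ∀ᶠ s in nhdsWithin 1 (Set.Iio 1), F s = h x₀ := by
        filter_upwards [Ioo_mem_nhdsLT_of_mem (a := (0:ℝ)) (Set.mem_Ioc.mpr ⟨by norm_num, le_refl 1⟩)]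
          with s hs
        obtain ⟨hs0, hs1⟩ := hs
        have hmem : (1 - s) • x₀ + s • y ∈ interior S :=
          hSconv.combo_interior_self_mem_interior hx₀ hy (by linarith) (by linarith)
            (by ring)
        have hFs : F s = h ((1 - s) • x₀ + s • y) := by
          rw [hF]
          have := hrep₁ _ (interior_subset hmem)
          rw [this, inner_add_right, real_inner_smul_right, real_inner_smul_right]
        rw [hFs, hconstU _ hmem]
      have hlim : Filter.Tendsto F (nhdsWithin 1 (Set.Iio 1)) (nhds (h x₀)) := by
        rw [Filter.tendsto_congr' hev]
        exact tendsto_const_nhds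
      have hF1 : F 1 = h x₀ := tendsto_nhds_unique hten hlim
      rw [hF] at hF1
      simp only [sub_self, zero_mul, one_mul, zero_add] at hF1
      rw [hrep₁ y hy, hF1]
    obtain ⟨x, hx, y, hyS, hxy⟩ := hnonconst
    exact hxy (by rw [hconstS x hx, hconstS y hyS])
  refine ⟨main, ?_⟩
  rintro t ⟨x, hxS, rfl⟩
  rw [← hrep₁ x hxS, hrep₂ x hxS, main]
end

section
/- Let (Ω, d) be a metric space, let a > 0, L⋆ > 0, C⋆ ≥ 0, D ≥ 0, and let u, p, q, r, v ∈ Ω satisfy: (i) the comparison (CN) inequality 2·d(u, v)² ≤ d(u, p)² + d(u, r)² − (1/2)·d(p, r)²; (ii) d(p, r) ≥ 2aL⋆; (iii) d(v, q) ≤ C⋆a²; and (iv) d(u, v) ≤ D and d(u, q) ≤ D. Then d(u, r)² − 2·d(u, q)² + d(u, p)² ≥ (2L⋆² − 4DC⋆)·a². In particular, if 2L⋆² > 4DC⋆ then the second-order difference (1/a²)[d(u, r)² − 2·d(u, q)² + d(u, p)²] is bounded below by the positive constant κ = 2L⋆² − 4DC⋆. -/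
/-- Derivation of the curvature assumption (A5) from the sufficient conditions
(K1)–(K3): in a metric space, if the comparison (CN) inequality holds for the
midpoint `v` of `p` and `r`, the endpoints satisfy the lower Lipschitz bound
`d(p, r) ≥ 2aL⋆`, the midpoint approximation `d(v, q) ≤ C⋆a²` holds, and distances
from `u` are bounded by `D`, then the second-order difference satisfies
`d(u,r)² − 2d(u,q)² + d(u,p)² ≥ (2L⋆² − 4DC⋆)a²`; in particular, if `2L⋆² > 4DC⋆`,
then `(1/a²)[d(u,r)² − 2d(u,q)² + d(u,p)²] ≥ κ := 2L⋆² − 4DC⋆ > 0`. -/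
theorem second_order_difference_lower_bound
    {Ω : Type*} [MetricSpace Ω] (a L C D : ℝ)
    (ha : 0 < a) (hL : 0 < L) (hC : 0 ≤ C) (hD : 0 ≤ D)
    (u p q r v : Ω)
    (hCN : 2 * dist u v ^ 2 ≤ dist u p ^ 2 + dist u r ^ 2 - (1 / 2) * dist p r ^ 2)
    (hpr : 2 * a * L ≤ dist p r)
    (hvq : dist v q ≤ C * a ^ 2)
    (huv : dist u v ≤ D) (huq : dist u q ≤ D) :
    (2 * L ^ 2 - 4 * D * C) * a ^ 2
        ≤ dist u r ^ 2 - 2 * dist u q ^ 2 + dist u p ^ 2 ∧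
    (4 * D * C < 2 * L ^ 2 →
      2 * L ^ 2 - 4 * D * C
        ≤ (1 / a ^ 2) * (dist u r ^ 2 - 2 * dist u q ^ 2 + dist u p ^ 2)) := by
  have hdist : |dist u q - dist u v| ≤ dist v q := by
    have := abs_dist_sub_le q v u
    rw [dist_comm q u, dist_comm v u, dist_comm q v] at this
    exact this
  have hsq : dist u q ^ 2 - dist u v ^ 2 ≤ 2 * D * (C * a ^ 2) := by
    have h1 : dist u q ^ 2 - dist u v ^ 2
        = (dist u q - dist u v) * (dist u q + dist u v) := by ring
    rw [h1]
    have h2 : dist u q - dist u v ≤ C * a ^ 2 :=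
      le_trans (le_trans (le_abs_self _) hdist) hvq
    have h3 : dist u q + dist u v ≤ 2 * D := by linarith
    have h4 : 0 ≤ dist u q + dist u v := by positivity
    calc (dist u q - dist u v) * (dist u q + dist u v)
        ≤ (C * a ^ 2) * (dist u q + dist u v) := by
          apply mul_le_mul_of_nonneg_right h2 h4
      _ ≤ (C * a ^ 2) * (2 * D) := by
          apply mul_le_mul_of_nonneg_left h3 (by positivity)
      _ = 2 * D * (C * a ^ 2) := by ring
  have hprsq : (2 * a * L) ^ 2 ≤ dist p r ^ 2 := by
    apply sq_le_sq' _ hpr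
    nlinarith [dist_nonneg (x := p) (y := r)]
  have main : (2 * L ^ 2 - 4 * D * C) * a ^ 2
      ≤ dist u r ^ 2 - 2 * dist u q ^ 2 + dist u p ^ 2 := by nlinarith
  refine ⟨main, fun _ => ?_⟩
  have ha2 : 0 < a ^ 2 := by positivity
  rw [div_mul_eq_mul_div, one_mul, le_div_iff₀ ha2]
  linarith [main]
end

section
/- Let z₀ ∈ ℝ, a > 0, C ≥ 0, and let q : ℝ × (0,1) → ℝ and r : (0,1) → ℝ be such that: for every t ∈ (0,1), the map z ↦ q(z, t) is twice continuously differentiable on an open set containing [z₀, z₀ + 2a] with |∂²q(z, t)/∂z²| ≤ r(t) for all z in that interval; the functions t ↦ q(z₀, t), t ↦ q(z₀+a, t), t ↦ q(z₀+2a, t) and r are measurable; and ∫₀¹ r(t)² dt ≤ C². Then ∫₀¹ ( (q(z₀, t) + q(z₀ + 2a, t))/2 − q(z₀ + a, t) )² dt ≤ (9/4)·C²·a⁴. -/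
open MeasureTheory

lemma midpoint_key {f : ℝ → ℝ} {z₀ a M : ℝ} (ha : 0 < a) {U : Set ℝ} (hU : IsOpen U)
    (hsub : Set.Icc z₀ (z₀ + 2 * a) ⊆ U) (hf : ContDiffOn ℝ 2 f U)
    (hbd : ∀ z ∈ Set.Icc z₀ (z₀ + 2 * a), |deriv (deriv f) z| ≤ M) :
    |(f z₀ + f (z₀ + 2 * a)) / 2 - f (z₀ + a)| ≤ M * a ^ 2 / 2 := by
  have hdf : ContDiffOn ℝ 1 (deriv f) U := hf.deriv_of_isOpen hU (by norm_num)
  have hd1 : ∀ x ∈ U, HasDerivAt f (deriv f x) x := fun x hx =>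
    ((hf.differentiableOn (by norm_num)).differentiableAt (hU.mem_nhds hx)).hasDerivAt
  have hd2 : ∀ x ∈ U, HasDerivAt (deriv f) (deriv (deriv f) x) x := fun x hx =>
    ((hdf.differentiableOn (by norm_num)).differentiableAt (hU.mem_nhds hx)).hasDerivAt
  set s := Set.Icc z₀ (z₀ + 2 * a)
  have hlip : ∀ x ∈ s, ∀ y ∈ s, ‖deriv f y - deriv f x‖ ≤ M * ‖y - x‖ := by
    intro x hx y hy
    exact Convex.norm_image_sub_le_of_norm_hasDerivWithin_le
      (fun z hz => ((hd2 z (hsub hz)).hasDerivWithinAt)) hbd (convex_Icc _ _) hx hy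
  set g : ℝ → ℝ := fun z => f (z + a) - f z with hg
  have hmem : ∀ z ∈ Set.Icc z₀ (z₀ + a), z ∈ s ∧ z + a ∈ s := by
    intro z hz
    refine ⟨⟨hz.1, by linarith [hz.2]⟩, ⟨by linarith [hz.1], by linarith [hz.2]⟩⟩
  have hgd : ∀ z ∈ Set.Icc z₀ (z₀ + a),
      HasDerivWithinAt g (deriv f (z + a) - deriv f z) (Set.Icc z₀ (z₀ + a)) z := by
    intro z hz
    have h1 : HasDerivAt (fun z => f (z + a)) (deriv f (z + a)) z := by
      have := (hd1 (z + a) (hsub (hmem z hz).2)).comp z ((hasDerivAt_id z).add_const a)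
      simpa [Function.comp_def] using this
    exact ((h1.sub (hd1 z (hsub (hmem z hz).1))).hasDerivWithinAt)
  have hgbd : ∀ z ∈ Set.Icc z₀ (z₀ + a), ‖deriv f (z + a) - deriv f z‖ ≤ M * a := by
    intro z hz
    have := hlip z (hmem z hz).1 (z + a) (hmem z hz).2
    simpa [abs_of_pos ha] using this
  have hM : 0 ≤ M := le_trans (abs_nonneg _) (hbd z₀ ⟨le_rfl, by linarith⟩)
  have key : ‖g (z₀ + a) - g z₀‖ ≤ (M * a) * ‖(z₀ + a) - z₀‖ :=
    Convex.norm_image_sub_le_of_norm_hasDerivWithin_le hgd hgbd (convex_Icc _ _)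
      ⟨le_rfl, by linarith⟩ ⟨by linarith, le_rfl⟩
  have h2 : |f (z₀ + a + a) - f (z₀ + a) - (f (z₀ + a) - f z₀)| ≤ M * a * a := by
    simpa [hg, abs_of_pos ha] using key
  have h3 : z₀ + a + a = z₀ + 2 * a := by ring
  rw [h3] at h2
  rw [abs_le] at h2 ⊢
  constructor <;> nlinarith [h2.1, h2.2]

/-- Verification of the midpoint approximation condition (K2) for distributional
responses (Wasserstein-2): writing `q z t` for the quantile function of the link
value at index `z`, evaluated at `t ∈ (0,1)`, if `z ↦ q z t` is twice continuously
differentiable with `|∂²q/∂z²| ≤ r t` on `[z₀, z₀ + 2a]` and `∫₀¹ r(t)² dt ≤ C²`,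
then the squared L²(0,1) distance between the average `(q(z₀,·) + q(z₀+2a,·))/2`
and `q(z₀+a, ·)` is at most `(9/4)C²a⁴`. -/
theorem midpoint_approximation_quantile
    (z₀ a C : ℝ) (ha : 0 < a) (hC : 0 ≤ C)
    (q : ℝ → ℝ → ℝ) (r : ℝ → ℝ)
    (hdiff : ∀ t ∈ Set.Ioo (0 : ℝ) 1, ∃ U : Set ℝ, IsOpen U ∧
      Set.Icc z₀ (z₀ + 2 * a) ⊆ U ∧ ContDiffOn ℝ 2 (fun z => q z t) U ∧
      ∀ z ∈ Set.Icc z₀ (z₀ + 2 * a), |deriv (deriv (fun z => q z t)) z| ≤ r t)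
    (hmeas₀ : Measurable (fun t => q z₀ t))
    (hmeas₁ : Measurable (fun t => q (z₀ + a) t))
    (hmeas₂ : Measurable (fun t => q (z₀ + 2 * a) t))
    (hmeasr : Measurable r)
    (hrint : IntegrableOn (fun t => (r t) ^ 2) (Set.Ioo (0 : ℝ) 1))
    (hrbd : ∫ t in Set.Ioo (0 : ℝ) 1, (r t) ^ 2 ≤ C ^ 2) :
    ∫ t in Set.Ioo (0 : ℝ) 1,
        ((q z₀ t + q (z₀ + 2 * a) t) / 2 - q (z₀ + a) t) ^ 2
      ≤ (9 / 4) * C ^ 2 * a ^ 4 := by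
  set h : ℝ → ℝ := fun t => (q z₀ t + q (z₀ + 2 * a) t) / 2 - q (z₀ + a) t with hh
  have hpt : ∀ t ∈ Set.Ioo (0 : ℝ) 1, h t ^ 2 ≤ a ^ 4 / 4 * r t ^ 2 := by
    intro t ht
    obtain ⟨U, hU, hsub, hf, hbd⟩ := hdiff t ht
    have := midpoint_key ha hU hsub hf hbd
    have h1 : |h t| ≤ r t * a ^ 2 / 2 := this
    have h2 := pow_le_pow_left₀ (abs_nonneg (h t)) h1 2
    rw [sq_abs] at h2
    nlinarith
  have hmeas : Measurable (fun t => h t ^ 2) :=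
    (((hmeas₀.add hmeas₂).div_const 2).sub hmeas₁).pow_const 2
  have hint : IntegrableOn (fun t => h t ^ 2) (Set.Ioo (0 : ℝ) 1) := by
    refine Integrable.mono' (hrint.const_mul (a ^ 4 / 4)) hmeas.aestronglyMeasurable ?_
    filter_upwards [self_mem_ae_restrict measurableSet_Ioo] with t ht
    rw [Real.norm_eq_abs, abs_of_nonneg (sq_nonneg (h t))]
    exact hpt t ht
  have hle : ∫ t in Set.Ioo (0 : ℝ) 1, h t ^ 2
      ≤ ∫ t in Set.Ioo (0 : ℝ) 1, a ^ 4 / 4 * r t ^ 2 :=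
    setIntegral_mono_on hint (hrint.const_mul _) measurableSet_Ioo hpt
  rw [integral_const_mul] at hle
  have ha4 : (0 : ℝ) ≤ a ^ 4 / 4 := by positivity
  calc ∫ t in Set.Ioo (0 : ℝ) 1, h t ^ 2
      ≤ a ^ 4 / 4 * ∫ t in Set.Ioo (0 : ℝ) 1, r t ^ 2 := hle
    _ ≤ a ^ 4 / 4 * C ^ 2 := by exact mul_le_mul_of_nonneg_left hrbd ha4
    _ ≤ (9 / 4) * C ^ 2 * a ^ 4 := by nlinarith [sq_nonneg C, sq_nonneg (a ^ 2)]
end
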